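/- Let p be a prime and m a positive integer. If i and j are integers with 0 ≤ i ≤ j ≤ ⌈m(p−1)/2⌉, then M_{p,m}(i) ≤ M_{p,m}(j); likewise, if ⌈m(p−1)/2⌉ ≤ j ≤ i ≤ m(p−1), then M_{p,m}(i) ≤ M_{p,m}(j). -/

import Mathlib

def Mpm (p m : ℕ) (i : ℤ) : ℕ :=
  (Finset.univ.filter (fun b : Fin m → Fin p => (∑ j, ((b j : ℕ) : ℤ)) = i)).card


lemma mpm_neg (p m : ℕ) (i : ℤ) (hi : i < 0) : Mpm p m i = 0 := by
  rw [Mpm, Finset.card_eq_zero, Finset.filter_eq_empty_iff]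
  intro b _
  have : (0:ℤ) ≤ ∑ j, ((b j : ℕ) : ℤ) := Finset.sum_nonneg fun j _ => Int.natCast_nonneg _
  omega

lemma rev_sum (p m : ℕ) (b : Fin m → Fin p) :
    (∑ j, (((b j).rev : ℕ) : ℤ)) = (m:ℤ) * ((p:ℤ) - 1) - ∑ j, ((b j : ℕ) : ℤ) := by
  have h : ∀ j : Fin m, (((b j).rev : ℕ) : ℤ) = (p:ℤ) - 1 - ((b j : ℕ) : ℤ) := by
    intro j
    have h1 : ((b j).rev : ℕ) = p - ((b j : ℕ) + 1) := Fin.val_rev _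
    have h2 := (b j).is_lt
    omega
  rw [Finset.sum_congr rfl fun j _ => h j, Finset.sum_sub_distrib, Finset.sum_const,
    Finset.card_univ, Fintype.card_fin, nsmul_eq_mul]

lemma mpm_sym (p : ℕ) (m : ℕ) (i : ℤ) :
    Mpm p m ((m:ℤ) * ((p:ℤ) - 1) - i) = Mpm p m i := by
  unfold Mpm
  apply Finset.card_nbij' (fun b => fun j => (b j).rev) (fun b => fun j => (b j).rev)
  · intro b hb
    simp only [Finset.mem_coe, Finset.mem_filter, Finset.mem_univ, true_and] at hb ⊢
    rw [rev_sum, hb]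
    ring
  · intro b hb
    simp only [Finset.mem_coe, Finset.mem_filter, Finset.mem_univ, true_and] at hb ⊢
    rw [rev_sum, hb]
  · intro b _; funext j; exact Fin.rev_rev _
  · intro b _; funext j; exact Fin.rev_rev _

lemma mpm_rec (p m : ℕ) (i : ℤ) :
    Mpm p (m+1) i = ∑ k ∈ Finset.range p, Mpm p m (i - (k:ℤ)) := by
  unfold Mpm
  rw [Finset.card_eq_sum_card_fiberwise
      (f := fun b : Fin (m+1) → Fin p => ((b 0 : ℕ))) (t := Finset.range p)
      (fun b _ => Finset.mem_range.2 (b 0).is_lt)]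
  refine Finset.sum_congr rfl fun k hk => ?_
  have hkp : k < p := Finset.mem_range.1 hk
  apply Finset.card_nbij' (fun b => Fin.tail b) (fun c => Fin.cons ⟨k, hkp⟩ c)
  · intro b hb
    simp only [Finset.mem_coe, Finset.mem_filter, Finset.mem_univ, true_and] at hb ⊢
    obtain ⟨h1, h2⟩ := hb
    rw [Fin.sum_univ_succ] at h1
    rw [h2] at h1
    unfold Fin.tail
    omega
  · intro c hc
    simp only [Finset.mem_coe, Finset.mem_filter, Finset.mem_univ, true_and] at hc ⊢
    constructor
    · rw [Fin.sum_univ_succ]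
      simp only [Fin.cons_zero, Fin.cons_succ]
      omega
    · simp [Fin.cons_zero]
  · intro b hb
    simp only [Finset.mem_coe, Finset.mem_filter, Finset.mem_univ, true_and] at hb
    have : b 0 = ⟨k, hkp⟩ := Fin.ext hb.2
    rw [← this]
    exact Fin.cons_self_tail b
  · intro c _
    exact Fin.tail_cons _ _

lemma mpm_key (p : ℕ) (hp : 1 ≤ p) : ∀ m : ℕ, ∀ x y : ℤ, 0 ≤ y → y ≤ x →
    2*x ≤ (m:ℤ)*((p:ℤ)-1)+1 → Mpm p m y ≤ Mpm p m x := by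
  intro m
  induction m with
  | zero =>
    intro x y h0 hyx hx
    simp only [Nat.cast_zero, zero_mul] at hx
    have : x = y := by omega
    rw [this]
  | succ m ih =>
    have hstep : ∀ v : ℤ, 2*v ≤ ((m:ℤ)+1)*((p:ℤ)-1) + 1 →
        Mpm p (m+1) (v-1) ≤ Mpm p (m+1) v := by
      intro v hv
      rw [mpm_rec, mpm_rec]
      obtain ⟨q, rfl⟩ : ∃ q, p = q + 1 := ⟨p-1, by omega⟩
      rw [Finset.sum_range_succ, Finset.sum_range_succ']
      have hAB : ∀ k ∈ Finset.range q,
          Mpm (q+1) m (v - 1 - (k:ℤ)) = Mpm (q+1) m (v - ((k:ℕ)+1:ℕ)) := by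
        intro k _
        congr 1
        push_cast
        ring
      rw [Finset.sum_congr rfl hAB]
      apply Nat.add_le_add_left
      -- goal : Mpm (q+1) m (v - 1 - q) ≤ Mpm (q+1) m (v - 0)
      have h0 : v - ((0:ℕ):ℤ) = v := by push_cast; ring
      rw [h0]
      set u : ℤ := v - 1 - (q:ℤ) with hu
      rcases lt_or_ge u 0 with hneg | hpos
      · rw [mpm_neg _ _ _ hneg]; exact Nat.zero_le _
      rcases le_or_gt (2*v) ((m:ℤ)*((q:ℤ)+1-1)+1) with hle | hgt
      · exact ih v u hpos (by omega) (by push_cast at hle ⊢; omega)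
      · have hrel : ((m:ℤ)+1)*(((q:ℤ)+1)-1) = (m:ℤ)*(((q:ℤ)+1)-1) + (q:ℤ) := by ring
        rw [← mpm_sym (q+1) m v]
        refine ih _ u hpos ?_ ?_
        · push_cast at hv hgt ⊢; omega
        · push_cast at hv hgt ⊢; omega
    intro x y h0 hyx hx
    obtain ⟨n, rfl⟩ : ∃ n : ℕ, x = y + n := ⟨(x - y).toNat, by omega⟩
    clear hyx
    revert hx
    induction n with
    | zero => intro _; simp
    | succ n ihn =>
      intro hx
      push_cast at hx
      refine le_trans (ihn (by push_cast; omega)) ?_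
      have h2 := hstep (y + ((n:ℤ)+1)) (by push_cast; omega)
      have h3 : y + ((n:ℤ)+1) - 1 = y + (n:ℤ) := by ring
      rw [h3] at h2
      have h4 : ((n+1:ℕ):ℤ) = (n:ℤ)+1 := by push_cast; ring
      rw [h4]
      exact h2

theorem stmt_14 (p m : ℕ) (hp : p.Prime) (hm : 0 < m) (i j : ℤ) :
    (0 ≤ i → i ≤ j → j ≤ (((m * (p - 1) + 1) / 2 : ℕ) : ℤ) →
      Mpm p m i ≤ Mpm p m j) ∧
    ((((m * (p - 1) + 1) / 2 : ℕ) : ℤ) ≤ j → j ≤ i → i ≤ (m : ℤ) * (p - 1) →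
      Mpm p m i ≤ Mpm p m j) := by
  have hple : 1 ≤ p := hp.one_lt.le
  have hD : ((m * (p-1) : ℕ) : ℤ) = (m:ℤ) * ((p:ℤ) - 1) := by
    rw [Nat.cast_mul, Nat.cast_sub hple]; norm_num
  set c : ℕ := (m * (p-1) + 1) / 2 with hc
  have hc1 : 2 * c ≤ m * (p-1) + 1 := by omega
  have hc2 : m * (p-1) ≤ 2 * c := by omega
  constructor
  · intro h0 hij hjc
    apply mpm_key p hple m j i h0 hij
    rw [← hD]
    omega
  · intro hcj hji hiD
    rw [← mpm_sym p m i, ← mpm_sym p m j]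
    apply mpm_key p hple m ((m:ℤ)*((p:ℤ)-1) - j) ((m:ℤ)*((p:ℤ)-1) - i)
    · omega
    · omega
    · rw [← hD] at hiD ⊢
      omega
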